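/- The set S of irrational t ∈ (0,1) whose regular continued fraction partial quotients satisfy e_{i+1}(t) ≥ φ^{d_i(t)} for infinitely many i (where φ = (1+√5)/2 and d_i(t) is the i-th convergent denominator) is uncountable. -/

import Mathlib

/-- One step of the Gauss map underlying the regular continued fraction. -/
noncomputable def gaussMap (x : ℝ) : ℝ := Int.fract (1 / x)

/-- The m-th partial quotient `e_m(t)` of the regular continued fraction
expansion of `t ∈ (0,1)` (for `m ≥ 1`). -/
noncomputable def partialQuotient (t : ℝ) (m : ℕ) : ℤ :=
  ⌊1 / (gaussMap^[m - 1] t)⌋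

/-- Numerators `c_n` of the convergents of the regular continued fraction of `t`. -/
noncomputable def convNum (t : ℝ) : ℕ → ℤ
  | 0 => 0
  | 1 => 1
  | (n + 2) => partialQuotient t (n + 2) * convNum t (n + 1) + convNum t n

/-- Denominators `d_n` of the convergents of the regular continued fraction of `t`. -/
noncomputable def convDen (t : ℝ) : ℕ → ℤ
  | 0 => 1
  | 1 => partialQuotient t 1
  | (n + 2) => partialQuotient t (n + 2) * convDen t (n + 1) + convDen t n

open Set

/-! ### Auxiliary machinery: constructing reals with prescribed partial quotients -/

/-- The inverse branch of the Gauss map with digit `k`. -/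
noncomputable def FF (k : ℕ) (x : ℝ) : ℝ := 1 / (k + x)

/-- Finite composition of inverse branches with digits `a 0, a 1, ..., a (n-1)`. -/
noncomputable def GG : (ℕ → ℕ) → ℕ → ℝ → ℝ
  | _, 0 => id
  | a, n + 1 => fun x => FF (a 0) (GG (fun i => a (i + 1)) n x)

lemma FF_mem {k : ℕ} (hk : 1 ≤ k) {x : ℝ} (hx : x ∈ Icc (0:ℝ) 1) :
    FF k x ∈ Icc (0:ℝ) 1 := by
  have h1 : (1:ℝ) ≤ (k:ℝ) + x := by
    have : (1:ℝ) ≤ (k:ℝ) := by exact_mod_cast hk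
    linarith [hx.1]
  have h0 : (0:ℝ) < (k:ℝ) + x := by linarith
  constructor
  · exact le_of_lt (by rw [FF]; exact div_pos one_pos h0)
  · rw [FF, div_le_one h0]; linarith

lemma GG_mem : ∀ (n : ℕ) (a : ℕ → ℕ), (∀ i, 1 ≤ a i) → ∀ x ∈ Icc (0:ℝ) 1,
    GG a n x ∈ Icc (0:ℝ) 1
  | 0, a, _, x, hx => hx
  | n + 1, a, ha, x, hx =>
    FF_mem (ha 0) (GG_mem n (fun i => a (i + 1)) (fun i => ha (i + 1)) x hx)

lemma FF_contOn {k : ℕ} (hk : 1 ≤ k) : ContinuousOn (FF k) (Icc (0:ℝ) 1) := by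
  apply ContinuousOn.div continuousOn_const (by fun_prop)
  intro x hx
  have : (1:ℝ) ≤ (k:ℝ) := by exact_mod_cast hk
  have := hx.1
  positivity

lemma GG_contOn : ∀ (n : ℕ) (a : ℕ → ℕ), (∀ i, 1 ≤ a i) →
    ContinuousOn (GG a n) (Icc (0:ℝ) 1)
  | 0, a, _ => continuousOn_id
  | n + 1, a, ha => by
    have h1 := GG_contOn n (fun i => a (i + 1)) (fun i => ha (i + 1))
    exact (FF_contOn (ha 0)).comp h1
      (fun x hx => GG_mem n (fun i => a (i + 1)) (fun i => ha (i + 1)) x hx)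

lemma GG_nested : ∀ (n : ℕ) (a : ℕ → ℕ), (∀ i, 1 ≤ a i) →
    GG a (n + 1) '' Icc (0:ℝ) 1 ⊆ GG a n '' Icc (0:ℝ) 1
  | 0, a, ha => by
    rintro y ⟨x, hx, rfl⟩
    exact ⟨FF (a 0) x, FF_mem (ha 0) hx, rfl⟩
  | n + 1, a, ha => by
    rintro y ⟨x, hx, rfl⟩
    obtain ⟨z, hz, hze⟩ := GG_nested n (fun i => a (i + 1)) (fun i => ha (i + 1))
      ⟨x, hx, rfl⟩
    exact ⟨z, hz, by simp only [GG, hze]⟩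

/-- The set of reals whose Gauss-map orbit follows the digit sequence `a`. -/
noncomputable def Sset (a : ℕ → ℕ) : Set ℝ := ⋂ n, GG a n '' Icc (0:ℝ) 1

lemma Sset_nonempty (a : ℕ → ℕ) (ha : ∀ i, 1 ≤ a i) : (Sset a).Nonempty := by
  apply IsCompact.nonempty_iInter_of_sequence_nonempty_isCompact_isClosed
  · exact fun n => GG_nested n a ha
  · exact fun n => (nonempty_Icc.2 zero_le_one).image _
  · exact isCompact_Icc.image_of_continuousOn (GG_contOn 0 a ha)
  · exact fun n =>
      (isCompact_Icc.image_of_continuousOn (GG_contOn n a ha)).isClosed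

lemma step (a : ℕ → ℕ) (ha : ∀ i, 1 ≤ a i) {t : ℝ} (ht : t ∈ Sset a) :
    t ∈ Ioo (0:ℝ) 1 ∧ ⌊1 / t⌋ = (a 0 : ℤ) ∧
      gaussMap t ∈ Sset (fun i => a (i + 1)) := by
  -- depth-3 representation gives a representative in the open interval
  have h3 := mem_iInter.1 ht 3
  obtain ⟨y, hy, hye⟩ := h3
  simp only [GG] at hye
  set z : ℝ := FF (a 2) y with hzdef
  have hz : z ∈ Icc (0:ℝ) 1 := FF_mem (ha 2) hy
  have hzpos : 0 < z := by
    rw [hzdef, FF]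
    have : (1:ℝ) ≤ (a 2 : ℝ) := by exact_mod_cast ha 2
    have := hy.1
    positivity
  set x : ℝ := FF (a 1) z with hxdef
  have ha1 : (1:ℝ) ≤ (a 1 : ℝ) := by exact_mod_cast ha 1
  have hxpos : 0 < x := by
    rw [hxdef, FF]; positivity
  have hxlt : x < 1 := by
    rw [hxdef, FF, div_lt_one (by positivity)]
    linarith
  have ha0 : (1:ℝ) ≤ (a 0 : ℝ) := by exact_mod_cast ha 0
  have hte : t = 1 / ((a 0 : ℝ) + x) := by rw [← hye]; rfl
  have hden : (1:ℝ) < (a 0 : ℝ) + x := by linarith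
  have htpos : 0 < t := by rw [hte]; positivity
  have htlt : t < 1 := by rw [hte, div_lt_one (by linarith)]; linarith
  have h1t : 1 / t = (a 0 : ℝ) + x := by
    rw [hte, one_div_one_div]
  have hfloor : ⌊1 / t⌋ = (a 0 : ℤ) := by
    rw [h1t, Int.floor_eq_iff]
    constructor
    · push_cast; linarith
    · push_cast; linarith
  have hg : gaussMap t = x := by
    rw [gaussMap, Int.fract, hfloor, h1t]
    push_cast; ring
  refine ⟨⟨htpos, htlt⟩, hfloor, ?_⟩
  rw [hg]
  rw [Sset, mem_iInter]
  intro n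
  have hn := mem_iInter.1 ht (n + 1)
  obtain ⟨w, hw, hwe⟩ := hn
  simp only [GG] at hwe
  set x' : ℝ := GG (fun i => a (i + 1)) n w with hx'def
  have hx' : x' ∈ Icc (0:ℝ) 1 := GG_mem n _ (fun i => ha (i + 1)) w hw
  have hte' : t = 1 / ((a 0 : ℝ) + x') := by rw [← hwe]; rfl
  have hden' : (0:ℝ) < (a 0 : ℝ) + x' := by linarith [hx'.1]
  have h1t' : 1 / t = (a 0 : ℝ) + x' := by rw [hte', one_div_one_div]
  have : x = x' := by
    have := h1t.symm.trans h1t'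
    linarith
  rw [this]
  exact ⟨w, hw, rfl⟩

lemma iter_mem (a : ℕ → ℕ) (ha : ∀ i, 1 ≤ a i) {t : ℝ} (ht : t ∈ Sset a) :
    ∀ m, gaussMap^[m] t ∈ Sset (fun i => a (i + m)) := by
  intro m
  induction m generalizing a t with
  | zero => exact ht
  | succ m ih =>
    rw [Function.iterate_succ_apply]
    exact ih (fun i => a (i + 1)) (fun i => ha (i + 1)) (step a ha ht).2.2

lemma pq_eq (a : ℕ → ℕ) (ha : ∀ i, 1 ≤ a i) {t : ℝ} (ht : t ∈ Sset a) (m : ℕ) :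
    partialQuotient t (m + 1) = (a m : ℤ) := by
  have h := iter_mem a ha ht m
  have := (step _ (fun i => ha (i + m)) h).2.1
  simpa [partialQuotient, Nat.zero_add] using this

lemma iter_Ioo (a : ℕ → ℕ) (ha : ∀ i, 1 ≤ a i) {t : ℝ} (ht : t ∈ Sset a) (m : ℕ) :
    gaussMap^[m] t ∈ Ioo (0:ℝ) 1 :=
  (step _ (fun i => ha (i + m)) (iter_mem a ha ht m)).1

/-- Rational numbers in `(0,1)` eventually escape `(0,1)` under the Gauss map. -/
lemma rat_escape : ∀ p : ℕ, ∀ q : ℕ, 0 < p → p < q →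
    ∃ n, gaussMap^[n] ((p : ℝ) / q) ∉ Ioo (0:ℝ) 1 := by
  intro p
  induction p using Nat.strong_induction_on with
  | _ p ih =>
    intro q hp hpq
    have hp' : (0:ℝ) < p := by exact_mod_cast hp
    have hg : gaussMap ((p : ℝ) / q) = ((q % p : ℕ) : ℝ) / p := by
      rw [gaussMap, one_div_div]
      exact_mod_cast Int.fract_div_natCast_eq_div_natCast_mod (k := ℝ) (m := q) (n := p)
    rcases Nat.eq_zero_or_pos (q % p) with h0 | hpos
    · refine ⟨1, ?_⟩
      rw [Function.iterate_one, hg, h0]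
      simp
    · obtain ⟨n, hn⟩ := ih (q % p) (Nat.mod_lt q hp) p hpos (Nat.mod_lt q hp)
      refine ⟨n + 1, ?_⟩
      rwa [Function.iterate_succ_apply, hg]

lemma irrational_of_orbit {t : ℝ} (h : ∀ n, gaussMap^[n] t ∈ Ioo (0:ℝ) 1) :
    Irrational t := by
  rw [Irrational]
  rintro ⟨x, rfl⟩
  have h0 := h 0
  simp only [Function.iterate_zero, id] at h0
  have hx0 : 0 < x := by exact_mod_cast h0.1
  have hx1 : x < 1 := by exact_mod_cast h0.2
  have hnum : 0 < x.num := Rat.num_pos.2 hx0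
  have hlt : x.num < (x.den : ℤ) := Rat.lt_one_iff_num_lt_denom.2 hx1
  have hcast : (x : ℝ) = ((x.num.natAbs : ℕ) : ℝ) / (x.den : ℕ) := by
    rw [Rat.cast_def]
    congr 1
    rw [Nat.cast_natAbs]
    exact congrArg _ (abs_of_pos (by exact_mod_cast hnum)).symm
  obtain ⟨n, hn⟩ := rat_escape x.num.natAbs x.den
    (by omega) (by omega)
  exact hn (by rw [← hcast]; exact h n)

/-! ### The digit sequences -/

/-- Pairs `(q_{n-1}, q_n)` of consecutive continued-fraction denominators built
from a boolean sequence. -/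
def qp (b : ℕ → Bool) : ℕ → ℕ × ℕ
  | 0 => (0, 1)
  | n + 1 => ((qp b n).2,
      (2 ^ (qp b n).2 + (bif b n then 1 else 0)) * (qp b n).2 + (qp b n).1)

def qd (b : ℕ → Bool) (n : ℕ) : ℕ := (qp b n).2

/-- The digit sequence: `a n = 2 ^ q_n + b n`. -/
def aseq (b : ℕ → Bool) (n : ℕ) : ℕ := 2 ^ qd b n + (bif b n then 1 else 0)

lemma qd_pos (b : ℕ → Bool) : ∀ n, 1 ≤ qd b n
  | 0 => le_refl 1
  | n + 1 => by
    have h := qd_pos b n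
    have h2 : 1 ≤ 2 ^ qd b n := Nat.one_le_two_pow
    simp only [qd, qp]
    calc 1 ≤ (2 ^ (qp b n).2 + (bif b n then 1 else 0)) * (qp b n).2 :=
          Nat.one_le_iff_ne_zero.2 (by
            have : (qp b n).2 ≠ 0 := by simpa [qd] using Nat.one_le_iff_ne_zero.1 h
            positivity)
      _ ≤ _ := Nat.le_add_right _ _

lemma aseq_pos (b : ℕ → Bool) (n : ℕ) : 1 ≤ aseq b n :=
  le_trans Nat.one_le_two_pow (Nat.le_add_right _ _)

/-- The real number whose partial quotients are `aseq b`. -/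
noncomputable def tOf (b : ℕ → Bool) : ℝ :=
  (Sset_nonempty (aseq b) (aseq_pos b)).some

lemma tOf_mem (b : ℕ → Bool) : tOf b ∈ Sset (aseq b) :=
  (Sset_nonempty (aseq b) (aseq_pos b)).some_mem

lemma tOf_pq (b : ℕ → Bool) (m : ℕ) :
    partialQuotient (tOf b) (m + 1) = (aseq b m : ℤ) :=
  pq_eq (aseq b) (aseq_pos b) (tOf_mem b) m

lemma tOf_convDen (b : ℕ → Bool) : ∀ n, convDen (tOf b) n = (qd b n : ℤ)
  | 0 => by simp [convDen, qd, qp]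
  | 1 => by
    rw [convDen, show (1:ℕ) = 0 + 1 from rfl, tOf_pq b 0]
    simp [qd, qp, aseq]
  | (n + 2) => by
    rw [convDen, tOf_convDen b (n + 1), tOf_convDen b n,
      show n + 2 = (n + 1) + 1 from rfl, tOf_pq b (n + 1)]
    have : qd b (n + 2) = aseq b (n + 1) * qd b (n + 1) + qd b n := by
      simp [qd, qp, aseq]
    rw [this]
    push_cast
    ring

lemma phi_le_two : (1 + Real.sqrt 5) / 2 ≤ 2 := by
  nlinarith [Real.sq_sqrt (by norm_num : (0:ℝ) ≤ 5), Real.sqrt_nonneg 5]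

lemma phi_pos : 0 < (1 + Real.sqrt 5) / 2 := by
  positivity

lemma tOf_growth (b : ℕ → Bool) (i : ℕ) :
    ((1 + Real.sqrt 5) / 2) ^ ((convDen (tOf b) i : ℤ) : ℝ) ≤
      (partialQuotient (tOf b) (i + 1) : ℝ) := by
  rw [tOf_convDen b i, tOf_pq b i]
  have h1 : ((qd b i : ℤ) : ℝ) = ((qd b i : ℕ) : ℝ) := by push_cast; ring
  rw [h1, Real.rpow_natCast]
  have h2 : ((1 + Real.sqrt 5) / 2) ^ (qd b i) ≤ (2:ℝ) ^ (qd b i) :=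
    pow_le_pow_left₀ phi_pos.le phi_le_two _
  refine h2.trans ?_
  have : ((aseq b i : ℤ) : ℝ) = 2 ^ (qd b i) + (bif b i then 1 else 0 : ℕ) := by
    rw [aseq]; push_cast; ring
  rw [this]
  have : (0:ℝ) ≤ ((bif b i then 1 else 0 : ℕ) : ℝ) := by positivity
  linarith

lemma qp_inj {b b' : ℕ → Bool} (h : ∀ m, aseq b m = aseq b' m) :
    ∀ m, qp b m = qp b' m
  | 0 => rfl
  | m + 1 => by
    have ih := qp_inj h m
    have hq : (qp b m).2 = (qp b' m).2 := by rw [ih]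
    have hm := h m
    simp only [aseq, qd, hq] at hm
    have hbif : (bif b m then 1 else 0 : ℕ) = (bif b' m then 1 else 0) :=
      Nat.add_left_cancel hm
    simp only [qp, ih, hbif]

lemma aseq_inj {b b' : ℕ → Bool} (h : ∀ m, aseq b m = aseq b' m) : b = b' := by
  funext m
  have hq : qd b m = qd b' m := by rw [qd, qd, qp_inj h m]
  have hm := h m
  simp only [aseq, hq] at hm
  have hbif : (bif b m then 1 else 0 : ℕ) = (bif b' m then 1 else 0) :=
    Nat.add_left_cancel hm
  cases hbm : b m <;> cases hbm' : b' m <;> simp [hbm, hbm'] at hbif ⊢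

lemma tOf_inj : Function.Injective tOf := by
  intro b b' h
  apply aseq_inj
  intro m
  have h2 : (aseq b m : ℤ) = (aseq b' m : ℤ) := by
    rw [← tOf_pq b m, h, tOf_pq b' m]
  exact_mod_cast h2

theorem stmt_18 :
    ¬ Set.Countable
        {t : ℝ | t ∈ Set.Ioo (0 : ℝ) 1 ∧ Irrational t ∧
          {i : ℕ | ((1 + Real.sqrt 5) / 2) ^ (convDen t i : ℝ) ≤
              (partialQuotient t (i + 1) : ℝ)}.Infinite} := by
  intro hS
  set S := {t : ℝ | t ∈ Set.Ioo (0 : ℝ) 1 ∧ Irrational t ∧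
      {i : ℕ | ((1 + Real.sqrt 5) / 2) ^ (convDen t i : ℝ) ≤
          (partialQuotient t (i + 1) : ℝ)}.Infinite} with hSdef
  have hmem : ∀ b : ℕ → Bool, tOf b ∈ S := by
    intro b
    refine ⟨(step _ (aseq_pos b) (tOf_mem b)).1, ?_, ?_⟩
    · exact irrational_of_orbit (fun n => iter_Ioo _ (aseq_pos b) (tOf_mem b) n)
    · have : {i : ℕ | ((1 + Real.sqrt 5) / 2) ^ (convDen (tOf b) i : ℝ) ≤
          (partialQuotient (tOf b) (i + 1) : ℝ)} = univ :=
        eq_univ_of_forall (fun i => tOf_growth b i)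
      rw [this]
      exact infinite_univ
  have hrange : (Set.range tOf).Countable :=
    hS.mono (range_subset_iff.2 hmem)
  have := hrange.to_subtype
  have hcb : Countable (ℕ → Bool) :=
    Countable.of_equiv _ (Equiv.ofInjective tOf tOf_inj).symm
  have hcs : Countable (Set ℕ) :=
    Countable.of_equiv (ℕ → Bool)
      (Equiv.piCongrRight fun _ => Equiv.propEquivBool.symm)
  obtain ⟨f, hf⟩ := exists_injective_nat (Set ℕ)
  exact Function.cantor_injective f hf
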